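/- Let H₁, …, H_N be d×d complex Hermitian matrices, let θ ∈ ℝ^N be a fixed parameter vector, let ψ₀ ∈ ℂ^d be a unit vector, and for ε ∈ ℝ^N define the noisy variational circuit state ψ_θ(ε) = exp(−iθ₁(1+ε₁)H₁)···exp(−iθ_N(1+ε_N)H_N)·ψ₀ (ordered matrix product applied to ψ₀). Then Σ_{i=1}^N |θ_i|·‖H_i‖₂ is a Lipschitz bound of ε ↦ ψ_θ(ε) with respect to the ∞-norm, i.e. for all ε, ε′ ∈ ℝ^N: ‖ψ_θ(ε) − ψ_θ(ε′)‖₂ ≤ (Σ_{i=1}^N |θ_i|·‖H_i‖₂)·‖ε − ε′‖_∞. -/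

import Mathlib

set_option autoImplicit false
set_option maxHeartbeats 1000000
set_option synthInstance.maxHeartbeats 400000

open scoped Matrix

/-- The operator norm (induced 2-norm, i.e. maximum singular value) of a complex matrix. -/
noncomputable def opNorm {m n : Type*} [Fintype m] [Fintype n] [DecidableEq n]
    (A : Matrix m n ℂ) : ℝ :=
  ‖LinearMap.toContinuousLinearMap (Matrix.toEuclideanLin A)‖

/-- The noisy variational circuit state
`ψ_θ(ε) = exp(−iθ₁(1+ε₁)H₁) ⋯ exp(−iθ_N(1+ε_N)H_N) ψ₀`
(ordered matrix product applied to `ψ₀`). -/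
noncomputable def vqaState {d N : ℕ} (H : Fin N → Matrix (Fin d) (Fin d) ℂ)
    (θ : Fin N → ℝ) (ψ₀ : EuclideanSpace ℂ (Fin d)) (ε : Fin N → ℝ) :
    EuclideanSpace ℂ (Fin d) :=
  Matrix.toEuclideanLin
    (List.ofFn fun i =>
      NormedSpace.exp ((-Complex.I * (θ i : ℂ) * (1 + (ε i : ℂ))) • H i)).prod ψ₀

section Aux

open NormedSpace

variable {A : Type*} [NormedRing A]

lemma aux_norm_prod_le_one [NormOneClass A] {N : ℕ} (f : Fin N → A) (hf : ∀ i, ‖f i‖ ≤ 1) :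
    ‖(List.ofFn f).prod‖ ≤ 1 := by
  induction N with
  | zero => simp
  | succ n ih =>
    rw [List.ofFn_succ, List.prod_cons]
    calc ‖f 0 * (List.ofFn fun i => f i.succ).prod‖
        ≤ ‖f 0‖ * ‖(List.ofFn fun i => f i.succ).prod‖ := norm_mul_le _ _
      _ ≤ 1 * 1 := mul_le_mul (hf 0) (ih _ fun i => hf i.succ) (norm_nonneg _) zero_le_one
      _ = 1 := one_mul 1

lemma aux_norm_prod_sub_prod [NormOneClass A] {N : ℕ} (f g : Fin N → A)
    (hf : ∀ i, ‖f i‖ ≤ 1) (hg : ∀ i, ‖g i‖ ≤ 1) :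
    ‖(List.ofFn f).prod - (List.ofFn g).prod‖ ≤ ∑ i, ‖f i - g i‖ := by
  induction N with
  | zero => simp
  | succ n ih =>
    rw [List.ofFn_succ, List.ofFn_succ, List.prod_cons, List.prod_cons, Fin.sum_univ_succ]
    set P := (List.ofFn fun i => f i.succ).prod
    set Q := (List.ofFn fun i => g i.succ).prod
    have key : f 0 * P - g 0 * Q = f 0 * (P - Q) + (f 0 - g 0) * Q := by
      rw [mul_sub, sub_mul]; abel
    rw [key]
    calc ‖f 0 * (P - Q) + (f 0 - g 0) * Q‖
        ≤ ‖f 0 * (P - Q)‖ + ‖(f 0 - g 0) * Q‖ := norm_add_le _ _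
      _ ≤ ‖f 0‖ * ‖P - Q‖ + ‖f 0 - g 0‖ * ‖Q‖ := add_le_add (norm_mul_le _ _) (norm_mul_le _ _)
      _ ≤ 1 * ‖P - Q‖ + ‖f 0 - g 0‖ * 1 := add_le_add
          (mul_le_mul_of_nonneg_right (hf 0) (norm_nonneg _))
          (mul_le_mul_of_nonneg_left (aux_norm_prod_le_one _ fun i => hg i.succ) (norm_nonneg _))
      _ = ‖P - Q‖ + ‖f 0 - g 0‖ := by ring
      _ ≤ (∑ i : Fin n, ‖f i.succ - g i.succ‖) + ‖f 0 - g 0‖ :=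
          add_le_add_left (ih (fun i => f i.succ) (fun i => g i.succ)
            (fun i => hf i.succ) (fun i => hg i.succ)) _
      _ = ‖f 0 - g 0‖ + ∑ i : Fin n, ‖f i.succ - g i.succ‖ := add_comm _ _

variable [StarRing A] [CStarRing A] [NormedAlgebra ℂ A] [CompleteSpace A] [StarModule ℂ A]
  [Nontrivial A]

lemma aux_exp_unit_norm (b : A) (hb : IsSelfAdjoint b) (u : ℝ) :
    ‖exp (Complex.I • (u • b))‖ = 1 := by
  have hsa : IsSelfAdjoint (u • b) := (IsSelfAdjoint.all u).smul hb
  exact CStarRing.norm_coe_unitary (selfAdjoint.expUnitary ⟨u • b, hsa⟩)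

lemma aux_exp_lipschitz (b : A) (hb : IsSelfAdjoint b) (s t : ℝ) :
    ‖exp (Complex.I • (s • b)) - exp (Complex.I • (t • b))‖ ≤ |s - t| * ‖b‖ := by
  have key : ∀ u : ℝ, HasDerivAt (fun v : ℝ => exp (v • (Complex.I • b)))
      ((Complex.I • b) * exp (u • (Complex.I • b))) u := by
    intro u
    have := hasDerivAt_exp_smul_const' (𝕂 := ℝ) (Complex.I • b) u
    exact this
  have hcomm : ∀ u : ℝ, u • (Complex.I • b) = Complex.I • (u • b) := fun u => smul_comm _ _ _
  have bound : ∀ u : ℝ, ‖(Complex.I • b) * exp (u • (Complex.I • b))‖ ≤ ‖b‖ := by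
    intro u
    calc ‖(Complex.I • b) * exp (u • (Complex.I • b))‖
        ≤ ‖Complex.I • b‖ * ‖exp (u • (Complex.I • b))‖ := norm_mul_le _ _
      _ ≤ ‖b‖ := by rw [hcomm, aux_exp_unit_norm b hb, norm_smul]; simp
  have := Convex.norm_image_sub_le_of_norm_hasDerivWithin_le
    (f := fun v : ℝ => exp (v • (Complex.I • b)))
    (fun x _ => (key x).hasDerivWithinAt) (fun x _ => bound x)
    convex_univ (Set.mem_univ t) (Set.mem_univ s)
  calc ‖exp (Complex.I • (s • b)) - exp (Complex.I • (t • b))‖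
      = ‖exp (s • (Complex.I • b)) - exp (t • (Complex.I • b))‖ := by
        rw [hcomm, hcomm]
    _ ≤ ‖b‖ * ‖s - t‖ := this
    _ = |s - t| * ‖b‖ := by rw [Real.norm_eq_abs, mul_comm]

end Aux

section Transfer

open NormedSpace
open scoped Matrix.Norms.L2Operator

variable {d : ℕ}

lemma aux_map_exp_clm (M : Matrix (Fin d) (Fin d) ℂ) :
    Matrix.toEuclideanCLM (𝕜 := ℂ) (exp M) = exp (Matrix.toEuclideanCLM (𝕜 := ℂ) M) := by
  let +nondep : NormedAlgebra ℚ (Matrix (Fin d) (Fin d) ℂ) := .restrictScalars ℚ ℂ _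
  exact map_exp (Matrix.toEuclideanCLM (𝕜 := ℂ) : Matrix (Fin d) (Fin d) ℂ ≃⋆ₐ[ℂ] _)
    ((AddMonoidHomClass.isometry_of_norm _
      (fun A => (Matrix.cstar_norm_def A).symm)).continuous) M

lemma aux_norm_clm_eq (M : Matrix (Fin d) (Fin d) ℂ) :
    ‖Matrix.toEuclideanCLM (𝕜 := ℂ) M‖ = opNorm M := rfl

lemma aux_selfAdjoint (M : Matrix (Fin d) (Fin d) ℂ) (h : M.IsHermitian) :
    IsSelfAdjoint (Matrix.toEuclideanCLM (𝕜 := ℂ) M) := by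
  rw [IsSelfAdjoint, ← map_star]
  congr 1

end Transfer

/-- Section VII of the paper: for a parametrized circuit with gates
`exp(−iθᵢHᵢ)` affected by coherent control errors `εᵢ`, the quantity `Σᵢ |θᵢ|·‖Hᵢ‖₂` is a
Lipschitz bound of `ε ↦ ψ_θ(ε)` w.r.t. the ∞-norm (the default norm on `Fin N → ℝ`). -/
theorem vqa_lipschitz_bound {d N : ℕ} (H : Fin N → Matrix (Fin d) (Fin d) ℂ)
    (hH : ∀ i, (H i).IsHermitian) (θ : Fin N → ℝ)
    (ψ₀ : EuclideanSpace ℂ (Fin d)) (hψ₀ : ‖ψ₀‖ = 1) (ε ε' : Fin N → ℝ) :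
    ‖vqaState H θ ψ₀ ε - vqaState H θ ψ₀ ε'‖ ≤
      (∑ i, |θ i| * opNorm (H i)) * ‖ε - ε'‖ := by
  classical
  open NormedSpace in
  haveI : Nontrivial (EuclideanSpace ℂ (Fin d)) :=
    nontrivial_of_ne ψ₀ 0 (fun h => by simp [h] at hψ₀)
  set T : Fin N → (EuclideanSpace ℂ (Fin d) →L[ℂ] EuclideanSpace ℂ (Fin d)) := fun i => Matrix.toEuclideanCLM (𝕜 := ℂ) (H i) with hT
  have hTsa : ∀ i, IsSelfAdjoint (T i) := fun i => aux_selfAdjoint (H i) (hH i)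
  -- the real coefficients
  set s : (Fin N → ℝ) → Fin N → ℝ := fun e i => -(θ i * (1 + e i)) with hs
  -- state as product of CLM exponentials
  have hstate : ∀ e : Fin N → ℝ, vqaState H θ ψ₀ e =
      (List.ofFn fun i => exp (Complex.I • (s e i • T i))).prod ψ₀ := by
    intro e
    have hcoe : ∀ M : Matrix (Fin d) (Fin d) ℂ, Matrix.toEuclideanLin M ψ₀ =
        Matrix.toEuclideanCLM (𝕜 := ℂ) M ψ₀ := fun _ => rfl
    have hentry : ∀ i : Fin N, Matrix.toEuclideanCLM (𝕜 := ℂ)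
        (exp ((-Complex.I * (θ i : ℂ) * (1 + (e i : ℂ))) • H i)) =
        exp (Complex.I • (s e i • T i)) := by
      intro i
      rw [aux_map_exp_clm, map_smul]
      congr 1
      have hc : (-Complex.I * (θ i : ℂ) * (1 + (e i : ℂ))) =
          Complex.I * ((s e i : ℝ) : ℂ) := by
        rw [hs]; push_cast; ring
      rw [hc, ← smul_smul, hT]
      norm_cast
    rw [vqaState, hcoe, map_list_prod, List.map_ofFn]
    exact congrArg (fun l : List (EuclideanSpace ℂ (Fin d) →L[ℂ] EuclideanSpace ℂ (Fin d)) => l.prod ψ₀)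
      (congrArg List.ofFn (funext fun i => hentry i))
  set f := fun i => exp (Complex.I • (s ε i • T i))
  set g := fun i => exp (Complex.I • (s ε' i • T i))
  have hf : ∀ i, ‖f i‖ ≤ 1 := fun i => le_of_eq (aux_exp_unit_norm (T i) (hTsa i) _)
  have hg : ∀ i, ‖g i‖ ≤ 1 := fun i => le_of_eq (aux_exp_unit_norm (T i) (hTsa i) _)
  have hterm : ∀ i, ‖f i - g i‖ ≤ |θ i| * opNorm (H i) * ‖ε - ε'‖ := by
    intro i
    calc ‖f i - g i‖ ≤ |s ε i - s ε' i| * ‖T i‖ := aux_exp_lipschitz (T i) (hTsa i) _ _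
      _ = |θ i| * |ε i - ε' i| * opNorm (H i) := by
          rw [aux_norm_clm_eq]
          congr 1
          have hss : s ε i - s ε' i = θ i * (ε' i - ε i) := by rw [hs]; ring
          rw [hss, abs_mul, abs_sub_comm]
      _ ≤ |θ i| * ‖ε - ε'‖ * opNorm (H i) := by
          apply mul_le_mul_of_nonneg_right _ (by rw [← aux_norm_clm_eq]; exact norm_nonneg _)
          apply mul_le_mul_of_nonneg_left _ (abs_nonneg _)
          have := norm_le_pi_norm (ε - ε') i
          simpa [Real.norm_eq_abs] using this
      _ = |θ i| * opNorm (H i) * ‖ε - ε'‖ := by ring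
  calc ‖vqaState H θ ψ₀ ε - vqaState H θ ψ₀ ε'‖
      = ‖((List.ofFn f).prod - (List.ofFn g).prod) ψ₀‖ := by
        rw [hstate ε, hstate ε', ← ContinuousLinearMap.sub_apply]
    _ ≤ ‖(List.ofFn f).prod - (List.ofFn g).prod‖ * ‖ψ₀‖ :=
        ContinuousLinearMap.le_opNorm _ _
    _ = ‖(List.ofFn f).prod - (List.ofFn g).prod‖ := by rw [hψ₀, mul_one]
    _ ≤ ∑ i, ‖f i - g i‖ := aux_norm_prod_sub_prod f g hf hg
    _ ≤ ∑ i, |θ i| * opNorm (H i) * ‖ε - ε'‖ := Finset.sum_le_sum fun i _ => hterm i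
    _ = (∑ i, |θ i| * opNorm (H i)) * ‖ε - ε'‖ := by rw [← Finset.sum_mul]
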